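/- Suborbit decomposition: with the setup of the completion-counting lemma, the suborbit S_{t,e} of full assignments with statistic t = c that extend evidence e (with type counts d) satisfies |S_{t,e}| = ∑_{A ∈ 𝒜_{t,e}} |γ(A)|, where 𝒜_{t,e} is the set of matrices A with row sums c, column sums d, and support contained in the compatibility relation, and γ(A) partitions the completions represented distinctly (γ(A) ∩ γ(A') = ∅ for A ≠ A'). -/

import Mathlib

/-- suborbit decomposition: the suborbit `S_{t,e}` of full
assignments with counting statistic `c` extending the evidence (of type map
`τ` with type counts `d`) decomposes as the disjoint union of the completion
sets `γ(A)` over all valid transport matrices `A ∈ 𝒜_{t,e}`: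
`|S_{t,e}| = ∑_{A ∈ 𝒜_{t,e}} |γ(A)|`, with the `γ(A)` pairwise disjoint. -/
theorem suborbit_decomposition {w k : ℕ}
    (τ : Fin k → (Fin w → Option Bool))
    (d : (Fin w → Option Bool) → ℕ)
    (hd : ∀ m, (Finset.univ.filter (fun ℓ => τ ℓ = m)).card = d m)
    (c : (Fin w → Bool) → ℕ) (hc : ∑ b, c b = k)
    (𝒜 : Finset ((Fin w → Bool) → (Fin w → Option Bool) → ℕ))
    (h𝒜 : ∀ A, A ∈ 𝒜 ↔
      ((∀ m, ∑ b, A b m = d m) ∧ (∀ b, ∑ m, A b m = c b) ∧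
       (∀ (b : Fin w → Bool) (m : Fin w → Option Bool),
         ¬ (∀ p v, m p = some v → b p = v) → A b m = 0)))
    (γ : ((Fin w → Bool) → (Fin w → Option Bool) → ℕ) →
      Finset (Fin k → (Fin w → Bool)))
    (hγ : ∀ A, γ A = Finset.univ.filter (fun f : Fin k → (Fin w → Bool) =>
        (∀ ℓ p v, τ ℓ p = some v → f ℓ p = v) ∧
        ∀ b m, (Finset.univ.filter (fun ℓ => τ ℓ = m ∧ f ℓ = b)).card = A b m)) :
    (Finset.univ.filter (fun x : Fin k → (Fin w → Bool) =>
        (∀ ℓ p v, τ ℓ p = some v → x ℓ p = v) ∧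
        ∀ b, (Finset.univ.filter (fun ℓ => x ℓ = b)).card = c b)).card
      = ∑ A ∈ 𝒜, (γ A).card ∧
    (∀ A ∈ 𝒜, ∀ A' ∈ 𝒜, A ≠ A' → Disjoint (γ A) (γ A')) := by
  have hdisj : ∀ A ∈ 𝒜, ∀ A' ∈ 𝒜, A ≠ A' → Disjoint (γ A) (γ A') := by
    intro A _ A' _ hne
    rw [Finset.disjoint_left]
    intro f hf hf'
    rw [hγ] at hf hf'
    simp only [Finset.mem_filter] at hf hf'
    exact hne (funext fun b => funext fun m =>
      ((hf.2.2 b m).symm.trans (hf'.2.2 b m)))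
  refine ⟨?_, hdisj⟩
  have key : (Finset.univ.filter (fun x : Fin k → (Fin w → Bool) =>
        (∀ ℓ p v, τ ℓ p = some v → x ℓ p = v) ∧
        ∀ b, (Finset.univ.filter (fun ℓ => x ℓ = b)).card = c b))
      = 𝒜.biUnion γ := by
    ext x
    simp only [Finset.mem_filter, Finset.mem_biUnion, Finset.mem_univ, true_and]
    constructor
    · rintro ⟨hext, hcount⟩
      refine ⟨fun b m => (Finset.univ.filter (fun ℓ => τ ℓ = m ∧ x ℓ = b)).card,
        ?_, ?_⟩
      · rw [h𝒜]
        refine ⟨?_, ?_, ?_⟩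
        · intro m
          rw [← hd m]
          rw [Finset.card_eq_sum_card_fiberwise
            (f := x) (t := Finset.univ) (fun ℓ _ => Finset.mem_univ _)]
          exact Finset.sum_congr rfl fun b _ => by
            rw [Finset.filter_filter]
        · intro b
          rw [← hcount b]
          rw [Finset.card_eq_sum_card_fiberwise
            (f := τ) (t := Finset.univ) (fun ℓ _ => Finset.mem_univ _)]
          refine Finset.sum_congr rfl fun m _ => ?_
          rw [Finset.filter_filter]
          exact Finset.card_nbij id (fun a ha => by
              simp only [Finset.mem_coe, Finset.coe_filter, Set.mem_setOf_eq, Finset.mem_filter, id] at ha ⊢; tauto)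
            (Set.injOn_id _) (fun a ha => by
              simp only [Finset.coe_filter, Set.mem_setOf_eq, Set.mem_image] at ha ⊢
              exact ⟨a, by tauto, rfl⟩)
        · intro b m hbm
          rw [Finset.card_eq_zero, Finset.filter_eq_empty_iff]
          rintro ℓ - ⟨hm, hb⟩
          exact hbm fun p v hv => by
            rw [← hb]; exact hext ℓ p v (hm ▸ hv)
      · rw [hγ]
        simp only [Finset.mem_filter, Finset.mem_univ, true_and]
        exact ⟨hext, fun _ _ => trivial⟩
    · rintro ⟨A, hA, hx⟩
      rw [hγ] at hx
      simp only [Finset.mem_filter, Finset.mem_univ, true_and] at hx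
      obtain ⟨hext, hcnt⟩ := hx
      refine ⟨hext, fun b => ?_⟩
      rw [← (h𝒜 A).mp hA |>.2.1 b]
      rw [Finset.card_eq_sum_card_fiberwise
        (f := τ) (t := Finset.univ) (fun ℓ _ => Finset.mem_univ _)]
      refine Finset.sum_congr rfl fun m _ => ?_
      rw [← hcnt b m, Finset.filter_filter]
      exact Finset.card_nbij id (fun a ha => by
          simp only [Finset.mem_coe, Finset.coe_filter, Set.mem_setOf_eq, Finset.mem_filter, id] at ha ⊢; tauto)
        (Set.injOn_id _) (fun a ha => by
          simp only [Finset.coe_filter, Set.mem_setOf_eq, Set.mem_image] at ha ⊢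
          exact ⟨a, by tauto, rfl⟩)
  rw [key, Finset.card_biUnion hdisj]
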